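/- The 5-dimensional KdV map φ(v₀,...,v₄) = (v₁,...,v₄, -v₀/(v₀v₂ - v₀v₃ - 1)) preserves the function I₃ = (v₁v₄ + 1)(v₀v₃ + 1)/(v₀v₁v₂v₃v₄). -/

import Mathlib

/-- The (3,-2) reduction of lattice KdV preserves I₃. -/
theorem kdv_map_preserves_I3 (v0 v1 v2 v3 v4 : ℝ)
    (h0 : v0 ≠ 0) (h1 : v1 ≠ 0) (h2 : v2 ≠ 0) (h3 : v3 ≠ 0) (h4 : v4 ≠ 0)
    (hden : v0 * v2 - v0 * v3 - 1 ≠ 0)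
    (v5 : ℝ) (hv5 : v5 = -v0 / (v0 * v2 - v0 * v3 - 1)) :
    (v2 * v5 + 1) * (v1 * v4 + 1) / (v1 * v2 * v3 * v4 * v5)
      = (v1 * v4 + 1) * (v0 * v3 + 1) / (v0 * v1 * v2 * v3 * v4) := by
  have h5 : v5 ≠ 0 := by
    rw [hv5]
    exact div_ne_zero (neg_ne_zero.mpr h0) hden
  subst hv5
  field_simp [show v0 * (v2 - v3) - 1 ≠ 0 by rwa [mul_sub]]
  ring
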